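/- Let Φ be a prime pure Horn CNF representing a pure Horn function h, and let W ⊆ V_h satisfy F_Φ(W) = W. Then the set X(W) := {C ∈ I(h) : Vars(C) ⊆ W} is an exclusive set of clauses of h. -/
import Mathlib


open Finset

/-- A clause, given by its (fin)sets of positive and negative variables. -/
structure Clause (V : Type*) where
  pos : Finset V
  neg : Finset V
deriving DecidableEq

namespace Clause

variable {V : Type*}

/-- A genuine clause: no variable occurs both positively and negatively. -/
def IsClause (C : Clause V) : Prop := Disjoint C.pos C.neg

/-- Evaluation of a clause (as a disjunction of literals) under an assignment. -/
def eval (C : Clause V) (a : V → Bool) : Prop :=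
  (∃ v ∈ C.pos, a v = true) ∨ (∃ v ∈ C.neg, a v = false)

/-- A pure (definite) Horn clause: exactly one positive literal, its head. -/
def IsPureHorn (C : Clause V) : Prop := ∃ v, C.pos = {v}

end Clause

variable {V : Type*}

/-- Conjunction (as a predicate on assignments) of a set of clauses. -/
def evalSet (S : Set (Clause V)) (a : V → Bool) : Prop := ∀ C ∈ S, C.eval a

/-- Conjunction of the clauses of a CNF, i.e. of a finite set of clauses. -/
def evalCNF (Φ : Finset (Clause V)) (a : V → Bool) : Prop := ∀ C ∈ Φ, C.eval a

/-- A CNF represents a Boolean function `h`. -/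
def Represents (Φ : Finset (Clause V)) (h : (V → Bool) → Prop) : Prop :=
  ∀ a, evalCNF Φ a ↔ h a

/-- A pure Horn CNF: all clauses are pure Horn. -/
def IsPureHornCNF (Φ : Finset (Clause V)) : Prop :=
  ∀ C ∈ Φ, C.IsClause ∧ C.IsPureHorn

/-- The forward chaining closure of a set `Q` of variables with respect to the
pure Horn CNF `Φ`: the smallest set containing `Q` such that whenever `Φ` contains
a clause `S → v` with `S` inside the set, also `v` belongs to it. -/
def fcClosure (Φ : Finset (Clause V)) (Q : Set V) : Set V :=
  ⋂₀ {T : Set V | Q ⊆ T ∧ ∀ C ∈ Φ, ∀ v : V, C.pos = {v} → ↑C.neg ⊆ T → v ∈ T}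

/-- `C` is an implicate of `h`: every assignment falsifying `C` falsifies `h`. -/
def Implicate (h : (V → Bool) → Prop) (C : Clause V) : Prop :=
  ∀ a, ¬ C.eval a → ¬ h a

/-- `C` is a prime implicate of `h`: an implicate from which no literal can be
deleted while remaining an implicate. -/
def PrimeImplicate [DecidableEq V] (h : (V → Bool) → Prop) (C : Clause V) : Prop :=
  C.IsClause ∧ Implicate h C ∧
  (∀ v ∈ C.pos, ¬ Implicate h ⟨C.pos.erase v, C.neg⟩) ∧
  (∀ v ∈ C.neg, ¬ Implicate h ⟨C.pos, C.neg.erase v⟩)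

/-- `C₁` and `C₂` are resolvable on `v`: `v` occurs positively in `C₁`, negatively in
`C₂`, and no other variable occurs with opposite signs in them. -/
def Resolvable (C₁ C₂ : Clause V) (v : V) : Prop :=
  v ∈ C₁.pos ∧ v ∈ C₂.neg ∧
  ∀ w, w ≠ v → ¬(w ∈ C₁.pos ∧ w ∈ C₂.neg) ∧ ¬(w ∈ C₁.neg ∧ w ∈ C₂.pos)

/-- The resolvent `R(C₁,C₂) = (C₁ \ {v}) ∪ (C₂ \ {v̄})`. -/
def resolventOf [DecidableEq V] (C₁ C₂ : Clause V) (v : V) : Clause V :=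
  ⟨C₁.pos.erase v ∪ C₂.pos, C₁.neg ∪ C₂.neg.erase v⟩

/-- A set of clauses closed under resolution. -/
def ResClosed [DecidableEq V] (S : Set (Clause V)) : Prop :=
  ∀ C₁ ∈ S, ∀ C₂ ∈ S, ∀ v, Resolvable C₁ C₂ v → resolventOf C₁ C₂ v ∈ S

/-- The resolution closure of a set of clauses. -/
def resClosure [DecidableEq V] (S : Set (Clause V)) : Set (Clause V) :=
  ⋂₀ {T : Set (Clause V) | S ⊆ T ∧ ResClosed T}

/-- `I(h)`: the resolution closure of the set of prime implicates of `h`. -/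
def implSet [DecidableEq V] (h : (V → Bool) → Prop) : Set (Clause V) :=
  resClosure {C | PrimeImplicate h C}

/-- An exclusive set of clauses of `h`. -/
def ExclusiveSet [DecidableEq V] (h : (V → Bool) → Prop) (Xs : Set (Clause V)) : Prop :=
  Xs ⊆ implSet h ∧
  ∀ C₁ ∈ implSet h, ∀ C₂ ∈ implSet h, ∀ v, Resolvable C₁ C₂ v →
    resolventOf C₁ C₂ v ∈ Xs → C₁ ∈ Xs ∧ C₂ ∈ Xs

/-- The set of variables occurring in a CNF. -/
def varsOf [DecidableEq V] (Φ : Finset (Clause V)) : Finset V :=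
  Φ.biUnion fun C => C.pos ∪ C.neg


section Aux

variable {V : Type*} [DecidableEq V]

lemma eval_of_implicate {h : (V → Bool) → Prop} {C : Clause V} (hi : Implicate h C)
    {a : V → Bool} (ha : h a) : C.eval a := by
  by_contra he; exact hi a he ha

/-- Prime implicates of a function represented by a pure Horn CNF are pure Horn. -/
lemma prime_isPureHorn {h : (V → Bool) → Prop} {Φ : Finset (Clause V)}
    (hPH : IsPureHornCNF Φ) (hrep : Represents Φ h) {C : Clause V}
    (hC : PrimeImplicate h C) : C.IsPureHorn := by
  obtain ⟨hcl, himp, hposmin, _⟩ := hC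
  have hT : h (fun _ => true) := by
    rw [← hrep]; intro D hD
    obtain ⟨_, u, hu⟩ := hPH D hD
    exact Or.inl ⟨u, by simp [hu], rfl⟩
  have hne : C.pos.Nonempty := by
    by_contra hno
    rw [Finset.not_nonempty_iff_eq_empty] at hno
    refine himp (fun _ => true) ?_ hT
    simp [Clause.eval, hno]
  obtain ⟨v, hv⟩ := hne
  refine ⟨v, ?_⟩
  by_contra hne2
  have hw : ∃ w ∈ C.pos, w ≠ v := by
    by_contra hall
    push_neg at hall
    exact hne2 (Finset.eq_singleton_iff_unique_mem.2 ⟨hv, hall⟩)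
  obtain ⟨w, hwpos, hwv⟩ := hw
  -- assignment from minimality at v
  have key : ∀ u ∈ C.pos, ∃ a : V → Bool, (∀ x ∈ C.pos, x ≠ u → a x = false) ∧
      (∀ x ∈ C.neg, a x = true) ∧ a u = true ∧ h a := by
    intro u hu
    have := hposmin u hu
    rw [Implicate] at this
    push_neg at this
    obtain ⟨a, hev, ha⟩ := this
    rw [Clause.eval] at hev
    push_neg at hev
    obtain ⟨h1, h2⟩ := hev
    simp only [Bool.not_eq_true] at h1
    simp only [Bool.not_eq_false] at h2
    have hau : a u = true := by
      have hevC := eval_of_implicate himp ha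
      rcases hevC with ⟨x, hx, hax⟩ | ⟨x, hx, hax⟩
      · by_cases hxu : x = u
        · rwa [hxu] at hax
        · exact absurd hax (by simp [h1 x (Finset.mem_erase.2 ⟨hxu, hx⟩)])
      · exact absurd hax (by simp [h2 x hx])
    exact ⟨a, fun x hx hxu => h1 x (Finset.mem_erase.2 ⟨hxu, hx⟩), h2, hau, ha⟩
  obtain ⟨a, ha1, ha2, hav, ha⟩ := key v hv
  obtain ⟨b, hb1, hb2, hbw, hb⟩ := key w hwpos
  set c : V → Bool := fun x => a x && b x with hc
  have hhc : h c := by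
    rw [← hrep]
    have haΦ : evalCNF Φ a := (hrep a).2 ha
    have hbΦ : evalCNF Φ b := (hrep b).2 hb
    intro D hD
    obtain ⟨_, u, hu⟩ := hPH D hD
    rcases haΦ D hD with ⟨x, hx, hax⟩ | ⟨x, hx, hax⟩
    · rcases hbΦ D hD with ⟨y, hy, hby⟩ | ⟨y, hy, hby⟩
      · rw [hu, Finset.mem_singleton] at hx hy
        refine Or.inl ⟨u, by simp [hu], ?_⟩
        rw [hx] at hax
        rw [hy] at hby
        simp [hc, hax, hby]
      · exact Or.inr ⟨y, hy, by simp [hc, hby]⟩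
    · exact Or.inr ⟨x, hx, by simp [hc, hax]⟩
  refine himp c ?_ hhc
  rw [Clause.eval]
  push_neg
  constructor
  · intro x hx
    by_cases hxv : x = v
    · subst hxv
      have : b x = false := hb1 x hx (fun hxw => hwv hxw.symm)
      simp [hc, this]
    · have : a x = false := ha1 x hx hxv
      simp [hc, this]
  · intro x hx
    simp [hc, ha2 x hx, hb2 x hx]

/-- The resolvent of two genuine pure Horn implicates is a genuine pure Horn implicate. -/
lemma resolvent_good {h : (V → Bool) → Prop} {C₁ C₂ : Clause V} {v : V}
    (g1 : C₁.IsClause ∧ C₁.IsPureHorn ∧ Implicate h C₁)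
    (g2 : C₂.IsClause ∧ C₂.IsPureHorn ∧ Implicate h C₂)
    (hres : Resolvable C₁ C₂ v) :
    (resolventOf C₁ C₂ v).IsClause ∧ (resolventOf C₁ C₂ v).IsPureHorn ∧
      Implicate h (resolventOf C₁ C₂ v) := by
  obtain ⟨hcl1, ⟨u1, hu1⟩, hi1⟩ := g1
  obtain ⟨hcl2, ⟨u2, hu2⟩, hi2⟩ := g2
  obtain ⟨hv1, hv2, hother⟩ := hres
  have hu1 : C₁.pos = {v} := by
    rw [hu1, Finset.mem_singleton] at hv1; rw [hu1, hv1]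
  refine ⟨?_, ⟨u2, ?_⟩, ?_⟩
  · -- genuine
    rw [Clause.IsClause, resolventOf, Finset.disjoint_left]
    intro x hx hxneg
    simp only [Finset.mem_union] at hx hxneg
    rcases hx with hx | hx
    · rw [hu1] at hx
      simp at hx
    · rcases hxneg with hxneg | hxneg
      · by_cases hxv : x = v
        · subst hxv
          exact (Finset.disjoint_left.1 hcl2) hx hv2
        · exact ((hother x hxv).2 ⟨hxneg, hx⟩)
      · exact (Finset.disjoint_left.1 hcl2) hx (Finset.mem_of_mem_erase hxneg)
  · rw [resolventOf]
    simp [hu1]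
    exact hu2
  · intro a hev ha
    rw [resolventOf, Clause.eval] at hev
    push_neg at hev
    obtain ⟨h1, h2⟩ := hev
    simp only [Finset.mem_union, Bool.not_eq_true] at h1
    simp only [Finset.mem_union, Bool.not_eq_false] at h2
    by_cases hav : a v = true
    · -- C₂ is falsified
      refine hi2 a ?_ ha
      rw [Clause.eval]; push_neg
      constructor
      · intro x hx; simpa using h1 x (Or.inr hx)
      · intro x hx
        by_cases hxv : x = v
        · subst hxv; simp [hav]
        · simpa using h2 x (Or.inr (Finset.mem_erase.2 ⟨hxv, hx⟩))
    · -- C₁ is falsified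
      refine hi1 a ?_ ha
      rw [Clause.eval]; push_neg
      constructor
      · intro x hx
        rw [hu1, Finset.mem_singleton] at hx
        subst hx
        simpa using hav
      · intro x hx; simpa using h2 x (Or.inl hx)

/-- Every clause in `implSet h` is a genuine pure Horn implicate. -/
lemma implSet_good {h : (V → Bool) → Prop} {Φ : Finset (Clause V)}
    (hPH : IsPureHornCNF Φ) (hrep : Represents Φ h) :
    implSet h ⊆ {C | C.IsClause ∧ C.IsPureHorn ∧ Implicate h C} := by
  apply Set.sInter_subset_of_mem
  constructor
  · intro C hC
    exact ⟨hC.1, prime_isPureHorn hPH hrep hC, hC.2.1⟩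
  · intro C₁ h1 C₂ h2 v hres
    exact resolvent_good h1 h2 hres

/-- If `(S → v)` is an implicate and `S ⊆ W` with `W` closed under forward chaining,
then `v ∈ W`. -/
lemma head_mem_of_implicate {h : (V → Bool) → Prop} {Φ : Finset (Clause V)}
    (hPH : IsPureHornCNF Φ) (hrep : Represents Φ h)
    {W : Set V} (hW : fcClosure Φ W = W) {C : Clause V} {v : V}
    (himp : Implicate h C) (hpos : C.pos = {v}) (hN : ↑C.neg ⊆ W) : v ∈ W := by
  classical
  set a : V → Bool := fun x => if x ∈ W then true else false with ha
  have hha : h a := by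
    rw [← hrep]
    intro D hD
    obtain ⟨_, u, hu⟩ := hPH D hD
    by_cases hn : ↑D.neg ⊆ W
    · have humem : u ∈ fcClosure Φ W :=
        Set.mem_sInter.2 fun T hT => hT.2 D hD u hu (hn.trans hT.1)
      rw [hW] at humem
      exact Or.inl ⟨u, by simp [hu], by simp [ha, humem]⟩
    · obtain ⟨x, hx, hxW⟩ : ∃ x ∈ D.neg, x ∉ W := by
        by_contra hc; push_neg at hc; exact hn hc
      exact Or.inr ⟨x, hx, by simp [ha, hxW]⟩
  rcases eval_of_implicate himp hha with ⟨x, hx, hax⟩ | ⟨x, hx, hax⟩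
  · rw [hpos, Finset.mem_singleton] at hx
    subst hx
    by_contra hvW
    simp [ha, hvW] at hax
  · have : x ∈ W := hN hx
    simp [ha, this] at hax

end Aux

/-- Boros et al.. Let `Φ` be a prime pure Horn CNF representing a
pure Horn function `h` and let `W ⊆ V_h` satisfy `F_Φ(W) = W`.  Then
`X(W) = {C ∈ I(h) : Vars(C) ⊆ W}` is an exclusive set of clauses of `h`. -/
theorem fcClosed_vars_exclusive {V : Type*} [DecidableEq V]
    (h : (V → Bool) → Prop) (Φ : Finset (Clause V))
    (hPH : IsPureHornCNF Φ)
    (hprime : ∀ C ∈ Φ, PrimeImplicate h C)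
    (hrep : Represents Φ h)
    (W : Set V) (hW : fcClosure Φ W = W) :
    ExclusiveSet h {C ∈ implSet h | ↑(C.pos ∪ C.neg) ⊆ W} := by
  constructor
  · intro C hC; exact hC.1
  · intro C₁ h1 C₂ h2 v hres hmem
    obtain ⟨_, hvars⟩ := hmem
    rw [resolventOf] at hvars
    have hsub : ∀ x : V, (x ∈ C₁.pos.erase v ∪ C₂.pos ∨ x ∈ C₁.neg ∪ C₂.neg.erase v) → x ∈ W := by
      intro x hx
      apply hvars
      simp only [Finset.coe_union, Set.mem_union, Finset.mem_coe]
      rcases hx with hx | hx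
      · exact Or.inl (by simpa using hx)
      · exact Or.inr (by simpa using hx)
    obtain ⟨hcl1, ⟨u1, hu1⟩, hi1⟩ := implSet_good hPH hrep h1
    obtain ⟨hcl2, ⟨u2, hu2⟩, hi2⟩ := implSet_good hPH hrep h2
    obtain ⟨hv1, hv2, _⟩ := hres
    have hu1 : C₁.pos = {v} := by
      rw [hu1, Finset.mem_singleton] at hv1; rw [hu1, hv1]
    have hneg1 : ↑C₁.neg ⊆ W := fun x hx =>
      hsub x (Or.inr (Finset.mem_union_left _ (by simpa using hx)))
    have hvW : v ∈ W := head_mem_of_implicate hPH hrep hW hi1 hu1 hneg1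
    constructor
    · refine ⟨h1, ?_⟩
      intro x hx
      simp only [Finset.coe_union, Set.mem_union, Finset.mem_coe] at hx
      rcases hx with hx | hx
      · rw [hu1, Finset.mem_singleton] at hx; subst hx; exact hvW
      · exact hneg1 hx
    · refine ⟨h2, ?_⟩
      intro x hx
      simp only [Finset.coe_union, Set.mem_union, Finset.mem_coe] at hx
      rcases hx with hx | hx
      · exact hsub x (Or.inl (Finset.mem_union_right _ hx))
      · by_cases hxv : x = v
        · subst hxv; exact hvW
        · exact hsub x (Or.inr (Finset.mem_union_right _ (Finset.mem_erase.2 ⟨hxv, hx⟩)))
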